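/- Suppose W is diagonalizable over ℂ: there exist linearly independent row vectors v_1, …, v_N ∈ ℂ^{1×N} and λ_1, …, λ_N ∈ ℂ with v_i·W = λ_i·v_i for all i. Assume: (1) the pair (W, Δ) satisfies the PBH condition; (2) for every i = 1, …, N the pair (E_{λ_i}, 𝓑(h)) satisfies the PBH condition; (3) for every θ ∈ ℂ and every family of row vectors ξ_1, …, ξ_N ∈ ℂ^{1×n} with ξ_i·(θI − E_{λ_i}) = 0 for all i and not all ξ_i zero, one has (Σ_{i=1}^{N} v_i ⊗ ξ_i)·(Δ ⊗ 𝓑(h)) ≠ 0. Then the networked sampled-data system (Φ_s, Ψ_s) is controllable. -/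

import Mathlib

open Matrix
open scoped Kronecker

/-- Entrywise complexification of a real matrix. -/
noncomputable def cpx {a b : Type*} (M : Matrix a b ℝ) : Matrix a b ℂ :=
  M.map (Complex.ofReal)

/-- The matrix exponential `e^{M}`. -/
noncomputable def mexp {q : Type*} [Fintype q] [DecidableEq q]
    (M : Matrix q q ℝ) : Matrix q q ℝ :=
  NormedSpace.exp M

/-- The entrywise integral `∫₀ʰ e^{Aτ} dτ`. -/
noncomputable def intExp {q : Type*} [Fintype q] [DecidableEq q]
    (A : Matrix q q ℝ) (h : ℝ) : Matrix q q ℝ :=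
  Matrix.of fun i j => ∫ τ in (0:ℝ)..h, (NormedSpace.exp (τ • A)) i j

/-- `θ` is an eigenvalue of the complex square matrix `M`. -/
def IsEig {q : Type*} [Fintype q] [DecidableEq q] (M : Matrix q q ℂ) (θ : ℂ) : Prop :=
  (θ • (1 : Matrix q q ℂ) - M).det = 0

/-- PBH condition for a pair of complex matrices: for every `s ∈ ℂ`, the only row
vector `v` with `v (sI - M) = 0` and `v G = 0` is `v = 0`. -/
def PBH {q r : Type*} [Fintype q] [DecidableEq q] [Fintype r]
    (M : Matrix q q ℂ) (G : Matrix q r ℂ) : Prop :=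
  ∀ (s : ℂ) (v : q → ℂ), v ᵥ* (s • (1 : Matrix q q ℂ) - M) = 0 → v ᵥ* G = 0 → v = 0

/-- Controllability of a discrete-time linear system `x⁺ = F x + G u`:
every state can be steered to the origin in finitely many steps. -/
def Controllable {q r : Type*} [Fintype q] [DecidableEq q] [Fintype r]
    (F : Matrix q q ℝ) (G : Matrix q r ℝ) : Prop :=
  ∀ x : q → ℝ, ∃ (k : ℕ) (u : Fin k → r → ℝ),
    (F ^ k) *ᵥ x + ∑ j : Fin k, (F ^ (k - 1 - (j : ℕ))) *ᵥ (G *ᵥ u j) = 0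

/-- `𝓑(h) = (∫₀ʰ e^{Aτ} dτ)·B`. -/
noncomputable def sampB {n p : ℕ} (A : Matrix (Fin n) (Fin n) ℝ)
    (B : Matrix (Fin n) (Fin p) ℝ) (h : ℝ) : Matrix (Fin n) (Fin p) ℝ :=
  intExp A h * B

/-- `𝓗(h) = (∫₀ʰ e^{Aτ} dτ)·H·C`. -/
noncomputable def sampH {n m : ℕ} (A : Matrix (Fin n) (Fin n) ℝ)
    (H : Matrix (Fin n) (Fin m) ℝ) (C : Matrix (Fin m) (Fin n) ℝ) (h : ℝ) :
    Matrix (Fin n) (Fin n) ℝ :=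
  intExp A h * H * C

/-- `Φ_s = I_N ⊗ e^{Ah} + W ⊗ 𝓗(h)`. -/
noncomputable def Phis {n m N : ℕ} (A : Matrix (Fin n) (Fin n) ℝ)
    (H : Matrix (Fin n) (Fin m) ℝ) (C : Matrix (Fin m) (Fin n) ℝ)
    (W : Matrix (Fin N) (Fin N) ℝ) (h : ℝ) :
    Matrix (Fin N × Fin n) (Fin N × Fin n) ℝ :=
  (1 : Matrix (Fin N) (Fin N) ℝ) ⊗ₖ mexp (h • A) + W ⊗ₖ sampH A H C h

/-- `E_λ = e^{Ah} + λ·𝓗(h)` (complexified). -/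
noncomputable def Emat {n m : ℕ} (A : Matrix (Fin n) (Fin n) ℝ)
    (H : Matrix (Fin n) (Fin m) ℝ) (C : Matrix (Fin m) (Fin n) ℝ)
    (h : ℝ) (lam : ℂ) : Matrix (Fin n) (Fin n) ℂ :=
  cpx (mexp (h • A)) + lam • cpx (sampH A H C h)


lemma cpx_mul {a b c : Type*} [Fintype b] (M : Matrix a b ℝ) (Q : Matrix b c ℝ) :
    cpx (M * Q) = cpx M * cpx Q := by
  ext i j
  simp [cpx, Matrix.mul_apply]

lemma cpx_vecMul {a b : Type*} [Fintype a] (w : a → ℝ) (M : Matrix a b ℝ) :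
    (fun i => ((w i : ℝ) : ℂ)) ᵥ* cpx M = fun j => (((w ᵥ* M) j : ℝ) : ℂ) := by
  funext j
  simp [cpx, vecMul, dotProduct]

lemma cpx_add {a b : Type*} (M Q : Matrix a b ℝ) : cpx (M + Q) = cpx M + cpx Q := by
  ext i j; simp [cpx]

lemma cpx_kron {a b c d : Type*} (M : Matrix a b ℝ) (Q : Matrix c d ℝ) :
    cpx (M ⊗ₖ Q) = cpx M ⊗ₖ cpx Q := by
  ext ⟨i1,i2⟩ ⟨j1,j2⟩
  simp [cpx, Matrix.kroneckerMap_apply]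

lemma cpx_one {a : Type*} [Fintype a] [DecidableEq a] :
    cpx (1 : Matrix a a ℝ) = 1 := by
  ext i j
  by_cases hij : i = j <;> simp [cpx, Matrix.one_apply, hij]

lemma vecMul_kron {a b c d : Type*} [Fintype a] [Fintype b]
    (x : a → ℂ) (y : b → ℂ) (M : Matrix a c ℂ) (K : Matrix b d ℂ) :
    (fun q : a × b => x q.1 * y q.2) ᵥ* (M ⊗ₖ K) =
      fun j : c × d => (x ᵥ* M) j.1 * (y ᵥ* K) j.2 := by
  funext j
  simp only [vecMul, dotProduct, Matrix.kroneckerMap_apply, Fintype.sum_prod_type]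
  rw [Finset.sum_mul_sum]
  congr 1; funext i1; congr 1; funext i2; ring

lemma vecMul_smulMat {a b : Type*} [Fintype a] (c : ℂ) (x : a → ℂ) (M : Matrix a b ℂ) :
    x ᵥ* (c • M) = c • (x ᵥ* M) := by
  funext j
  simp only [vecMul, dotProduct, Matrix.smul_apply, Pi.smul_apply, smul_eq_mul, Finset.mul_sum]
  apply Finset.sum_congr rfl
  intros; ring

lemma vecMul_smulMat' {a b : Type*} [Fintype a] (c : ℝ) (x : a → ℝ) (M : Matrix a b ℝ) :
    x ᵥ* (c • M) = c • (x ᵥ* M) := by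
  funext j
  simp only [vecMul, dotProduct, Matrix.smul_apply, Pi.smul_apply, smul_eq_mul, Finset.mul_sum]
  apply Finset.sum_congr rfl
  intros; ring

lemma annihilator_zero_of_PBH {q r : Type*} [Fintype q] [DecidableEq q]
    [Fintype r] [DecidableEq r]
    (F : Matrix q q ℝ) (G : Matrix q r ℝ) (hpbh : PBH (cpx F) (cpx G))
    (w : q → ℝ) (hw : ∀ i : ℕ, w ᵥ* (F ^ i * G) = 0) : w = 0 := by
  by_contra hw0
  set Wc : Submodule ℂ (q → ℂ) :=
    ⨅ i : ℕ, LinearMap.ker ((cpx (F ^ i * G)).vecMulLinear) with hWc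
  have hmem : ∀ z : q → ℂ, z ∈ Wc ↔ ∀ i : ℕ, z ᵥ* cpx (F ^ i * G) = 0 := by
    intro z
    simp [hWc, Submodule.mem_iInf, LinearMap.mem_ker]
  set vc : q → ℂ := fun j => ((w j : ℝ) : ℂ) with hvcdef
  have hvc : vc ∈ Wc := by
    rw [hmem]
    intro i
    rw [hvcdef, cpx_vecMul, hw i]
    funext j; simp
  have hvc0 : vc ≠ 0 := by
    intro hz
    apply hw0
    funext j
    have := congrFun hz j
    simpa [hvcdef] using this
  set T : Module.End ℂ (q → ℂ) := (cpx F).vecMulLinear with hT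
  have hinv : ∀ z ∈ Wc, T z ∈ Wc := by
    intro z hz
    rw [hmem] at hz ⊢
    intro i
    have hFM : F * (F ^ i * G) = F ^ (i + 1) * G := by
      rw [pow_succ', Matrix.mul_assoc]
    have : (z ᵥ* cpx F) ᵥ* cpx (F ^ i * G) = z ᵥ* cpx (F ^ (i + 1) * G) := by
      rw [Matrix.vecMul_vecMul, ← cpx_mul, hFM]
    simpa [hT, this] using hz (i + 1)
  haveI : Nontrivial Wc := by
    refine Submodule.nontrivial_iff_ne_bot.mpr ?_
    intro hbot
    exact hvc0 (by simpa [hbot] using hvc)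
  obtain ⟨c, hc⟩ := Module.End.exists_eigenvalue (T.restrict hinv)
  obtain ⟨x, hxe, hx0⟩ := hc.exists_hasEigenvector
  have hxeig : T (x : q → ℂ) = c • (x : q → ℂ) := by
    have := hxe
    rw [Module.End.mem_eigenspace_iff] at this
    have := congrArg (Subtype.val) this
    simpa [LinearMap.restrict_apply] using this
  have h1 : (x : q → ℂ) ᵥ* (c • (1 : Matrix q q ℂ) - cpx F) = 0 := by
    rw [Matrix.vecMul_sub, vecMul_smulMat, Matrix.vecMul_one]
    rw [show (x : q → ℂ) ᵥ* cpx F = T (x : q → ℂ) from rfl, hxeig]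
    simp
  have h2 : (x : q → ℂ) ᵥ* cpx G = 0 := by
    have := (hmem _).mp x.2 0
    simpa using this
  have := hpbh c _ h1 h2
  exact hx0 (Subtype.ext this)

lemma controllable_of_PBH {q r : Type*} [Fintype q] [DecidableEq q]
    [Fintype r] [DecidableEq r]
    (F : Matrix q q ℝ) (G : Matrix q r ℝ) (hpbh : PBH (cpx F) (cpx G)) :
    Controllable F G := by
  classical
  set S : ℕ → Submodule ℝ (q → ℝ) :=
    fun k => ⨆ i ∈ Finset.range k, LinearMap.range ((F ^ i * G).mulVecLin) with hS
  have hSmono : Monotone S := by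
    intro k k' hk
    exact biSup_mono (fun i hi => Finset.mem_range.mpr (lt_of_lt_of_le (Finset.mem_range.mp hi) hk))
  have hfull : (⨆ i : ℕ, LinearMap.range ((F ^ i * G).mulVecLin)) = ⊤ := by
    by_contra hne
    have hlt : (⨆ i : ℕ, LinearMap.range ((F ^ i * G).mulVecLin)) < ⊤ :=
      lt_top_iff_ne_top.mpr hne
    obtain ⟨f, hf0, hker⟩ := Submodule.exists_le_ker_of_lt_top _ hlt
    set w : q → ℝ := fun i => f (fun j => if i = j then 1 else 0) with hwdef
    have hfx : ∀ x : q → ℝ, f x = ∑ i, x i * w i := by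
      intro x
      conv_lhs => rw [pi_eq_sum_univ x]
      rw [map_sum]
      simp [hwdef, smul_eq_mul, mul_comm]
    have hw0 : w ≠ 0 := by
      intro hzz
      apply hf0
      ext x
      simp [hfx, hzz]
    have hann : ∀ i : ℕ, w ᵥ* (F ^ i * G) = 0 := by
      intro i
      funext j2
      have hmem : ((F ^ i * G) *ᵥ (fun j => if j2 = j then 1 else 0)) ∈
          LinearMap.range ((F ^ i * G).mulVecLin) := ⟨_, rfl⟩
      have : f ((F ^ i * G) *ᵥ (fun j => if j2 = j then 1 else 0)) = 0 := by
        have := hker (Submodule.mem_iSup_of_mem i hmem)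
        simpa using this
      rw [hfx] at this
      simp only [Matrix.mulVec, dotProduct] at this
      simp only [Matrix.vecMul, dotProduct, Pi.zero_apply]
      rw [← this]
      congr 1
      funext i1
      simp only [mul_ite, mul_one, mul_zero, Finset.sum_ite_eq, Finset.mem_univ, if_true]
      ring
    exact hw0 (annihilator_zero_of_PBH F G hpbh w hann)
  obtain ⟨n₀, hn₀⟩ := monotone_stabilizes_iff_noetherian.mpr inferInstance ⟨S, hSmono⟩
  set k := n₀ + 1 with hk
  have hStop : S k = ⊤ := by
    rw [eq_top_iff, ← hfull]
    apply iSup_le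
    intro i
    have h1 : LinearMap.range ((F ^ i * G).mulVecLin) ≤ S (i + 1) :=
      le_iSup₂ (f := fun (i' : ℕ) (_ : i' ∈ Finset.range (i+1)) =>
        LinearMap.range ((F ^ i' * G).mulVecLin)) i (Finset.mem_range.mpr (Nat.lt_succ_self i))
    have h2 : S (i + 1) ≤ S (max k (i + 1)) := hSmono (le_max_right _ _)
    have h3 : S (max k (i + 1)) = S k := by
      have ha := hn₀ (max k (i+1)) (le_trans (Nat.le_succ n₀) (le_max_left _ _))
      have hb := hn₀ k (Nat.le_succ n₀)
      exact ha.symm.trans hb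
    exact h1.trans (h2.trans_eq h3)
  set L : (Fin k → r → ℝ) →ₗ[ℝ] (q → ℝ) :=
    ∑ j : Fin k, ((F ^ (k - 1 - (j : ℕ)) * G).mulVecLin).comp (LinearMap.proj j) with hL
  have hLapp : ∀ u : Fin k → r → ℝ,
      L u = ∑ j : Fin k, (F ^ (k - 1 - (j : ℕ)) * G) *ᵥ (u j) := by
    intro u
    simp [hL, LinearMap.sum_apply]
  have hLtop : LinearMap.range L = ⊤ := by
    rw [eq_top_iff, ← hStop]
    apply iSup_le
    intro i
    apply iSup_le
    intro hi
    rw [Finset.mem_range] at hi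
    rintro y ⟨u0, rfl⟩
    have hik : k - 1 - (k - 1 - i) = i := by omega
    refine ⟨Pi.single (⟨k - 1 - i, by omega⟩ : Fin k) u0, ?_⟩
    rw [hLapp]
    rw [Finset.sum_eq_single (⟨k - 1 - i, by omega⟩ : Fin k)]
    · rw [Pi.single_eq_same,
        show k - 1 - ((⟨k - 1 - i, by omega⟩ : Fin k) : ℕ) = i from hik,
        Matrix.mulVecLin_apply]
    · intro b _ hb
      rw [Pi.single_eq_of_ne hb]
      simp
    · simp
  intro x
  have hsurj : Function.Surjective L := LinearMap.range_eq_top.mp hLtop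
  obtain ⟨u, hu⟩ := hsurj (-((F ^ k) *ᵥ x))
  refine ⟨k, u, ?_⟩
  have : ∑ j : Fin k, (F ^ (k - 1 - (j : ℕ))) *ᵥ (G *ᵥ u j) = L u := by
    rw [hLapp]
    congr 1
    funext j
    rw [Matrix.mulVec_mulVec]
  rw [this, hu]
  simp

theorem stmt4
    (n m p N : ℕ) (hn : 0 < n) (hm : 0 < m) (hp : 0 < p) (hN : 0 < N)
    (h : ℝ) (hh : 0 < h)
    (A : Matrix (Fin n) (Fin n) ℝ) (B : Matrix (Fin n) (Fin p) ℝ)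
    (C : Matrix (Fin m) (Fin n) ℝ) (H : Matrix (Fin n) (Fin m) ℝ)
    (W : Matrix (Fin N) (Fin N) ℝ)
    (δ : Fin N → ℝ) (hδ : ∀ i, δ i = 0 ∨ δ i = 1)
    (v : Fin N → Fin N → ℂ) (lam : Fin N → ℂ)
    (hvli : LinearIndependent ℂ v)
    (hev : ∀ i, v i ᵥ* cpx W = lam i • v i)
    (h1 : PBH (cpx W) (cpx (Matrix.diagonal δ)))
    (h2 : ∀ i, PBH (Emat A H C h (lam i)) (cpx (sampB A B h)))
    (h3 : ∀ θ : ℂ, ∀ ξ : Fin N → Fin n → ℂ,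
      (∀ i, ξ i ᵥ* (θ • (1 : Matrix (Fin n) (Fin n) ℂ) - Emat A H C h (lam i)) = 0) →
      (∃ i, ξ i ≠ 0) →
      (fun q : Fin N × Fin n => ∑ i, v i q.1 * ξ i q.2) ᵥ*
        cpx (Matrix.diagonal δ ⊗ₖ sampB A B h) ≠ 0)
 :
    Controllable (Phis A H C W h) (Matrix.diagonal δ ⊗ₖ sampB A B h) := by
  apply controllable_of_PBH
  intro s vt hM hG
  classical
  haveI : Nonempty (Fin N) := Fin.pos_iff_nonempty.mp hN
  have hcard : Fintype.card (Fin N) = Module.finrank ℂ (Fin N → ℂ) := by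
    simp [Module.finrank_fintype_fun_eq_card]
  let b : Module.Basis (Fin N) ℂ (Fin N → ℂ) := basisOfLinearIndependentOfCardEqFinrank hvli hcard
  have hb : ⇑b = v := coe_basisOfLinearIndependentOfCardEqFinrank hvli hcard
  set ξ : Fin N → Fin n → ℂ := fun i q2 => b.repr (fun q1 => vt (q1, q2)) i with hxi
  have hdec : ∀ q : Fin N × Fin n, vt q = ∑ i, v i q.1 * ξ i q.2 := by
    rintro ⟨q1, q2⟩
    have h0 := b.sum_repr (fun q1 => vt (q1, q2))
    have h1 := congrFun h0 q1
    simp only [Finset.sum_apply, Pi.smul_apply, smul_eq_mul, hb] at h1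
    rw [← h1]
    exact Finset.sum_congr rfl (fun i _ => mul_comm _ _)
  -- decomposition of the complexified system matrix
  have hPhi : cpx (Phis A H C W h) =
      (1 : Matrix (Fin N) (Fin N) ℂ) ⊗ₖ cpx (mexp (h • A)) + cpx W ⊗ₖ cpx (sampH A H C h) := by
    rw [Phis, cpx_add, cpx_kron, cpx_kron, cpx_one]
  have hsplit : ∀ (M : Matrix (Fin N) (Fin N) ℂ) (K : Matrix (Fin n) (Fin n) ℂ),
      vt ᵥ* (M ⊗ₖ K) = fun j : Fin N × Fin n => ∑ i, (v i ᵥ* M) j.1 * (ξ i ᵥ* K) j.2 := by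
    intro M K
    have hvt : vt = ∑ i, (fun q : Fin N × Fin n => v i q.1 * ξ i q.2) := by
      funext q; rw [hdec q, Finset.sum_apply]
    rw [hvt]
    have hlin : (∑ i, fun q : Fin N × Fin n => v i q.1 * ξ i q.2) ᵥ* (M ⊗ₖ K)
        = ∑ i, (fun q : Fin N × Fin n => v i q.1 * ξ i q.2) ᵥ* (M ⊗ₖ K) := by
      have := map_sum ((M ⊗ₖ K).vecMulLinear)
        (fun i => (fun q : Fin N × Fin n => v i q.1 * ξ i q.2)) Finset.univ
      exact this
    rw [hlin]
    funext j
    rw [Finset.sum_apply]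
    apply Finset.sum_congr rfl
    intro i _
    rw [vecMul_kron]
  have hterm1 : vt ᵥ* ((1 : Matrix (Fin N) (Fin N) ℂ) ⊗ₖ cpx (mexp (h • A))) =
      fun j : Fin N × Fin n => ∑ i, v i j.1 * (ξ i ᵥ* cpx (mexp (h • A))) j.2 := by
    rw [hsplit]
    funext j
    simp [Matrix.vecMul_one]
  have hterm2 : vt ᵥ* (cpx W ⊗ₖ cpx (sampH A H C h)) =
      fun j : Fin N × Fin n => ∑ i, v i j.1 * (ξ i ᵥ* (lam i • cpx (sampH A H C h))) j.2 := by
    rw [hsplit]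
    funext j
    apply Finset.sum_congr rfl
    intro i _
    rw [hev i, vecMul_smulMat]
    simp only [Pi.smul_apply, smul_eq_mul]
    ring
  have hM2 : s • vt - vt ᵥ* cpx (Phis A H C W h) = 0 := by
    have h0 := hM
    rw [Matrix.vecMul_sub, vecMul_smulMat, Matrix.vecMul_one] at h0
    exact h0
  have hexp : ∀ (i : Fin N) (j2 : Fin n),
      (ξ i ᵥ* (s • (1 : Matrix (Fin n) (Fin n) ℂ) - Emat A H C h (lam i))) j2
        = s * ξ i j2 - ((ξ i ᵥ* cpx (mexp (h • A))) j2
            + (ξ i ᵥ* (lam i • cpx (sampH A H C h))) j2) := by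
    intro i j2
    rw [Matrix.vecMul_sub, vecMul_smulMat, Matrix.vecMul_one]
    simp only [Emat, Matrix.vecMul_add]
    simp
  have hsum : ∀ j : Fin N × Fin n,
      ∑ i, (ξ i ᵥ* (s • (1 : Matrix (Fin n) (Fin n) ℂ) - Emat A H C h (lam i))) j.2 * v i j.1
        = 0 := by
    intro j
    have h0 := congrFun hM2 j
    rw [hPhi, Matrix.vecMul_add, hterm1, hterm2] at h0
    simp only [Pi.sub_apply, Pi.smul_apply, Pi.add_apply, smul_eq_mul, Pi.zero_apply] at h0
    rw [hdec j] at h0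
    calc ∑ i, (ξ i ᵥ* (s • (1 : Matrix (Fin n) (Fin n) ℂ) - Emat A H C h (lam i))) j.2 * v i j.1
        = ∑ i, (s * ξ i j.2 - ((ξ i ᵥ* cpx (mexp (h • A))) j.2
            + (ξ i ᵥ* (lam i • cpx (sampH A H C h))) j.2)) * v i j.1 := by
          exact Finset.sum_congr rfl (fun i _ => by rw [hexp i j.2])
      _ = s * (∑ i, v i j.1 * ξ i j.2)
          - ((∑ i, v i j.1 * (ξ i ᵥ* cpx (mexp (h • A))) j.2)
            + (∑ i, v i j.1 * (ξ i ᵥ* (lam i • cpx (sampH A H C h))) j.2)) := by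
          rw [Finset.mul_sum, ← Finset.sum_add_distrib, ← Finset.sum_sub_distrib]
          exact Finset.sum_congr rfl (fun i _ => by ring)
      _ = 0 := h0
  have hkey : ∀ i, ξ i ᵥ* (s • (1 : Matrix (Fin n) (Fin n) ℂ) - Emat A H C h (lam i)) = 0 := by
    intro i0
    funext j2
    have hli := Fintype.linearIndependent_iff.mp hvli
      (fun i => (ξ i ᵥ* (s • (1 : Matrix (Fin n) (Fin n) ℂ) - Emat A H C h (lam i))) j2)
    have hz : ∑ i, (ξ i ᵥ* (s • (1 : Matrix (Fin n) (Fin n) ℂ)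
        - Emat A H C h (lam i))) j2 • v i = 0 := by
      funext q1
      rw [Finset.sum_apply]
      simpa [smul_eq_mul] using hsum (q1, j2)
    exact hli hz i0
  by_cases hex : ∃ i, ξ i ≠ 0
  · exfalso
    apply h3 s ξ hkey hex
    rw [show (fun q : Fin N × Fin n => ∑ i, v i q.1 * ξ i q.2) = vt from
      funext (fun q => (hdec q).symm)]
    exact hG
  · push_neg at hex
    funext q
    rw [hdec q]
    simp [hex]
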